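/- (Modified Gronwall bound used in the convergence analysis.) Let η : [0,T] → ℝ be continuous and nonnegative, and suppose A η(t)² ≤ ∫₀ᵗ (a(s)η(s) + b(s)) ds for all t ∈ [0,T], where A > 0 and a, b are continuous nonnegative functions. Then η(t) ≤ (1/A)∫₀ᵗ a(s) ds + sup_{s∈[0,t]} √((1/A)∫₀ˢ b(r) dr) for all t ∈ [0,T]. -/

import Mathlib

open MeasureTheory intervalIntegral

/-- Modified Gronwall bound: if A η(t)² ≤ ∫₀ᵗ (a η + b) for all t ∈ [0,T], with
η continuous nonnegative, A > 0 and a, b continuous nonnegative, then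
η(t) ≤ (1/A)∫₀ᵗ a + sup_{s∈[0,t]} √((1/A)∫₀ˢ b). -/
theorem stmt15 (T A : ℝ) (hT : 0 ≤ T) (hA : 0 < A)
    (η a b : ℝ → ℝ)
    (hη : ContinuousOn η (Set.Icc 0 T))
    (hηnn : ∀ t ∈ Set.Icc (0 : ℝ) T, 0 ≤ η t)
    (ha : ContinuousOn a (Set.Icc 0 T))
    (hann : ∀ t ∈ Set.Icc (0 : ℝ) T, 0 ≤ a t)
    (hbc : ContinuousOn b (Set.Icc 0 T))
    (hbnn : ∀ t ∈ Set.Icc (0 : ℝ) T, 0 ≤ b t)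
    (hineq : ∀ t ∈ Set.Icc (0 : ℝ) T,
      A * η t ^ 2 ≤ ∫ s in (0 : ℝ)..t, (a s * η s + b s)) :
    ∀ t ∈ Set.Icc (0 : ℝ) T,
      η t ≤ (1 / A) * (∫ s in (0 : ℝ)..t, a s) +
        sSup ((fun s => Real.sqrt ((1 / A) * ∫ r in (0 : ℝ)..s, b r)) ''
          Set.Icc 0 t) := by
  intro t ht
  obtain ⟨ht0, htT⟩ := ht
  have hIcc : Set.Icc (0:ℝ) t ⊆ Set.Icc 0 T := Set.Icc_subset_Icc le_rfl htT
  -- maximum point of η on [0, t]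
  obtain ⟨t', ht', hmax⟩ := isCompact_Icc.exists_isMaxOn (Set.nonempty_Icc.mpr ht0)
    (hη.mono hIcc)
  have hmax' : ∀ s ∈ Set.Icc (0:ℝ) t, η s ≤ η t' := hmax
  obtain ⟨ht'0, ht't⟩ := ht'
  set M := η t' with hM
  have hMnn : 0 ≤ M := hηnn t' (hIcc ⟨ht'0, ht't⟩)
  -- integrability helpers
  have intsub : ∀ x ∈ Set.Icc (0:ℝ) t, Set.uIcc (0:ℝ) x ⊆ Set.Icc 0 T := by
    intro x hx
    rw [Set.uIcc_of_le hx.1]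
    exact Set.Icc_subset_Icc le_rfl (hx.2.trans htT)
  have intsub' : ∀ x ∈ Set.Icc (0:ℝ) t, Set.uIcc x t ⊆ Set.Icc 0 T := by
    intro x hx
    rw [Set.uIcc_of_le hx.2]
    exact Set.Icc_subset_Icc hx.1 htT
  have ia : ∀ x ∈ Set.Icc (0:ℝ) t, IntervalIntegrable a volume 0 x :=
    fun x hx => (ha.mono (intsub x hx)).intervalIntegrable
  have ia' : ∀ x ∈ Set.Icc (0:ℝ) t, IntervalIntegrable a volume x t :=
    fun x hx => (ha.mono (intsub' x hx)).intervalIntegrable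
  have ib : ∀ x ∈ Set.Icc (0:ℝ) t, IntervalIntegrable b volume 0 x :=
    fun x hx => (hbc.mono (intsub x hx)).intervalIntegrable
  have ib' : ∀ x ∈ Set.Icc (0:ℝ) t, IntervalIntegrable b volume x t :=
    fun x hx => (hbc.mono (intsub' x hx)).intervalIntegrable
  have iaηb : IntervalIntegrable (fun s => a s * η s + b s) volume 0 t' :=
    (((ha.mono (intsub t' ⟨ht'0, ht't⟩)).mul (hη.mono (intsub t' ⟨ht'0, ht't⟩))).add
      (hbc.mono (intsub t' ⟨ht'0, ht't⟩))).intervalIntegrable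
  have iaMb : IntervalIntegrable (fun s => a s * M + b s) volume 0 t' :=
    (((ia t' ⟨ht'0, ht't⟩).mul_const M).add (ib t' ⟨ht'0, ht't⟩))
  -- monotonicity of integrals of b
  have hbmono : ∀ s ∈ Set.Icc (0:ℝ) t, (∫ r in (0:ℝ)..s, b r) ≤ ∫ r in (0:ℝ)..t, b r := by
    intro s hs
    have hadj := intervalIntegral.integral_add_adjacent_intervals (ib s hs) (ib' s hs)
    have hpos : 0 ≤ ∫ r in s..t, b r :=
      intervalIntegral.integral_nonneg hs.2
        (fun r hr => hbnn r ⟨hs.1.trans hr.1, hr.2.trans htT⟩)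
    linarith
  -- main chain of inequalities at t'
  have h1 : A * M ^ 2 ≤ ∫ s in (0:ℝ)..t', a s * η s + b s :=
    hineq t' (hIcc ⟨ht'0, ht't⟩)
  have h2 : (∫ s in (0:ℝ)..t', a s * η s + b s) ≤ ∫ s in (0:ℝ)..t', a s * M + b s := by
    apply intervalIntegral.integral_mono_on ht'0 iaηb iaMb
    intro s hs
    have hs' : s ∈ Set.Icc (0:ℝ) t := ⟨hs.1, hs.2.trans ht't⟩
    have := hmax' s hs'
    have hasnn := hann s (hIcc hs')
    nlinarith
  have h3 : (∫ s in (0:ℝ)..t', a s * M + b s)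
      = (∫ s in (0:ℝ)..t', a s) * M + ∫ s in (0:ℝ)..t', b s := by
    rw [intervalIntegral.integral_add ((ia t' ⟨ht'0, ht't⟩).mul_const M) (ib t' ⟨ht'0, ht't⟩),
      intervalIntegral.integral_mul_const]
  have h4 : (∫ s in (0:ℝ)..t', a s) ≤ ∫ s in (0:ℝ)..t, a s := by
    have hadj := intervalIntegral.integral_add_adjacent_intervals
      (ia t' ⟨ht'0, ht't⟩) (ia' t' ⟨ht'0, ht't⟩)
    have hpos : 0 ≤ ∫ s in t'..t, a s :=
      intervalIntegral.integral_nonneg ht't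
        (fun r hr => hann r ⟨ht'0.trans hr.1, hr.2.trans htT⟩)
    linarith
  have h5 : (∫ s in (0:ℝ)..t', b s) ≤ ∫ s in (0:ℝ)..t, b s :=
    hbmono t' ⟨ht'0, ht't⟩
  set C := (1 / A) * ∫ s in (0:ℝ)..t, a s with hC
  set B := (1 / A) * ∫ r in (0:ℝ)..t, b r with hB
  have hCnn : 0 ≤ C := by
    have : 0 ≤ ∫ s in (0:ℝ)..t, a s :=
      intervalIntegral.integral_nonneg ht0 (fun r hr => hann r (hIcc hr))
    positivity
  have hBnn : 0 ≤ B := by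
    have : 0 ≤ ∫ r in (0:ℝ)..t, b r :=
      intervalIntegral.integral_nonneg ht0 (fun r hr => hbnn r (hIcc hr))
    positivity
  set S := Real.sqrt B with hSdef
  have hSnn : 0 ≤ S := Real.sqrt_nonneg B
  have hS2 : S ^ 2 = B := Real.sq_sqrt hBnn
  have hCA : (∫ s in (0:ℝ)..t, a s) = A * C := by rw [hC, ← mul_assoc, mul_one_div_cancel hA.ne', one_mul]
  have hBA : (∫ r in (0:ℝ)..t, b r) = A * B := by rw [hB, ← mul_assoc, mul_one_div_cancel hA.ne', one_mul]
  -- quadratic inequality: A M² ≤ A C M + A B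
  have hquad : A * M ^ 2 ≤ A * C * M + A * S ^ 2 := by
    rw [hS2]
    calc A * M ^ 2 ≤ (∫ s in (0:ℝ)..t', a s) * M + ∫ s in (0:ℝ)..t', b s := by
          rw [← h3]; exact h1.trans h2
      _ ≤ (∫ s in (0:ℝ)..t, a s) * M + ∫ r in (0:ℝ)..t, b r := by
          have := mul_le_mul_of_nonneg_right h4 hMnn
          linarith
      _ = A * C * M + A * B := by rw [hCA, hBA]
  have hMle : M ≤ C + S := by
    by_contra hcon
    push_neg at hcon
    have hMS : S ≤ M := le_trans (le_add_of_nonneg_left hCnn) hcon.le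
    have hMpos : 0 < M := lt_of_le_of_lt (add_nonneg hCnn hSnn) hcon
    nlinarith [mul_pos hA (mul_pos hMpos (sub_pos.mpr hcon)),
      mul_nonneg hA.le (mul_nonneg hSnn (sub_nonneg.mpr hMS))]
  -- the sup bound
  have hbdd : BddAbove ((fun s => Real.sqrt ((1 / A) * ∫ r in (0:ℝ)..s, b r)) '' Set.Icc 0 t) := by
    refine ⟨S, ?_⟩
    rintro x ⟨s, hs, rfl⟩
    apply Real.sqrt_le_sqrt
    have := hbmono s hs
    rw [hB]
    have h1A : (0:ℝ) ≤ 1 / A := by positivity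
    exact mul_le_mul_of_nonneg_left this h1A
  have hSle : S ≤ sSup ((fun s => Real.sqrt ((1 / A) * ∫ r in (0:ℝ)..s, b r)) '' Set.Icc 0 t) := by
    apply le_csSup hbdd
    exact ⟨t, ⟨le_rfl.trans ht0, le_rfl⟩, rfl⟩
  have hηt : η t ≤ M := hmax' t ⟨ht0, le_rfl⟩
  linarith
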